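/- If the coefficients of a G-invariant series satisfy D^{(k)}·b_{i,j} = Σ_{p+q=k} binom(p+i,i)binom(q+j,j) b_{p+i,q+j}, then each coefficient can be recovered from boundary coefficients: b_{i,j} = Σ_{p+q=j} (-1)^p binom(i+p, i) D^{(q)} · b_{i+p, 0}. -/

import Mathlib

/-- If the coefficients of a `G`-invariant series over a `ℂ[T]`-module `B` with
divided-power operators `D^{(k)}` satisfy
`D^{(k)}·b_{i,j} = Σ_{p+q=k} binom(p+i,i) binom(q+j,j) b_{p+i,q+j}`,
then each coefficient can be recovered from boundary coefficients:
`b_{i,j} = Σ_{p+q=j} (-1)^p binom(i+p, i) D^{(q)} · b_{i+p, 0}`. -/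
theorem coeff_from_boundary
    (B : Type*) [AddCommGroup B] [Module ℂ B]
    (Dop : ℕ → B →ₗ[ℂ] B)
    (b : ℕ → ℕ → B)
    (hinv : ∀ k i j : ℕ, Dop k (b i j) =
      ∑ p ∈ Finset.range (k + 1),
        (((p + i).choose i : ℂ) * (((k - p) + j).choose j : ℂ)) • b (p + i) ((k - p) + j)) :
    ∀ i j : ℕ, b i j =
      ∑ p ∈ Finset.range (j + 1),
        ((-1 : ℂ) ^ p * ((i + p).choose i : ℂ)) • Dop (j - p) (b (i + p) 0) := by
  intro i j
  have step1 : ∀ p ∈ Finset.range (j + 1),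
      ((-1 : ℂ) ^ p * ((i + p).choose i : ℂ)) • Dop (j - p) (b (i + p) 0) =
      ∑ r ∈ Finset.range (j - p + 1),
        ((-1 : ℂ) ^ p * ((i + p).choose i : ℂ) * ((r + (i + p)).choose (i + p) : ℂ)) •
          b (r + (i + p)) (j - p - r) := by
    intro p hp
    rw [hinv (j - p) (i + p) 0, Finset.smul_sum]
    refine Finset.sum_congr rfl fun r hr => ?_
    simp [smul_smul, mul_assoc]
  rw [Finset.sum_congr rfl step1, Finset.sum_sigma']
  have step2 :
      (∑ x ∈ (Finset.range (j + 1)).sigma (fun p => Finset.range (j - p + 1)),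
        ((-1 : ℂ) ^ x.1 * ((i + x.1).choose i : ℂ) * ((x.2 + (i + x.1)).choose (i + x.1) : ℂ)) •
          b (x.2 + (i + x.1)) (j - x.1 - x.2)) =
      ∑ x ∈ (Finset.range (j + 1)).sigma (fun s => Finset.range (s + 1)),
        ((-1 : ℂ) ^ x.2 * ((i + x.2).choose i : ℂ) * (((x.1 - x.2) + (i + x.2)).choose (i + x.2) : ℂ)) •
          b (i + x.1) (j - x.1) := by
    refine Finset.sum_nbij' (fun x => ⟨x.1 + x.2, x.1⟩) (fun x => ⟨x.2, x.1 - x.2⟩) ?_ ?_ ?_ ?_ ?_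
    · rintro ⟨p, r⟩ h
      simp only [Finset.mem_sigma, Finset.mem_range] at h ⊢
      omega
    · rintro ⟨s, p⟩ h
      simp only [Finset.mem_sigma, Finset.mem_range] at h ⊢
      omega
    · rintro ⟨p, r⟩ h; simp
    · rintro ⟨s, p⟩ h
      simp only [Finset.mem_sigma, Finset.mem_range] at h
      simp only [Sigma.mk.inj_iff]
      constructor
      · omega
      · exact heq_of_eq (by omega)
    · rintro ⟨p, r⟩ h
      simp only [Finset.mem_sigma, Finset.mem_range] at h
      have h1 : p + r - p = r := by omega
      have h2 : r + (i + p) = i + (p + r) := by omega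
      have h3 : j - p - r = j - (p + r) := by omega
      simp [h1, h2, h3]
  rw [step2, Finset.sum_sigma]
  have step3 : ∀ s ∈ Finset.range (j + 1),
      (∑ p ∈ Finset.range (s + 1),
        ((-1 : ℂ) ^ p * ((i + p).choose i : ℂ) * (((s - p) + (i + p)).choose (i + p) : ℂ)) •
          b (i + s) (j - s)) = if s = 0 then b i j else 0 := by
    intro s hs
    rw [← Finset.sum_smul]
    have hcoef : (∑ p ∈ Finset.range (s + 1),
        ((-1 : ℂ) ^ p * ((i + p).choose i : ℂ) * (((s - p) + (i + p)).choose (i + p) : ℂ))) =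
        ((i + s).choose i : ℂ) * ∑ p ∈ Finset.range (s + 1), ((-1 : ℂ) ^ p * ((s).choose p : ℂ)) := by
      rw [Finset.mul_sum]
      refine Finset.sum_congr rfl fun p hp => ?_
      simp only [Finset.mem_range] at hp
      have hps : p ≤ s := by omega
      have h2 : (s - p) + (i + p) = i + s := by omega
      rw [h2]
      have key : (i + s).choose (i + p) * (i + p).choose i = (i + s).choose i * s.choose p := by
        have := Nat.choose_mul (n := i + s) (k := i + p) (s := i) (by omega)
        simpa [Nat.add_sub_cancel_left] using this
      have hc : ((i + p).choose i : ℂ) * ((i + s).choose (i + p) : ℂ) =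
          ((i + s).choose i : ℂ) * (s.choose p : ℂ) := by
        rw [mul_comm]; exact_mod_cast congrArg (Nat.cast (R := ℂ)) key
      rw [mul_assoc, hc]; ring
    rw [hcoef]
    have halt : (∑ p ∈ Finset.range (s + 1), ((-1 : ℂ) ^ p * ((s).choose p : ℂ))) =
        if s = 0 then 1 else 0 := by
      have := Int.alternating_sum_range_choose (n := s)
      have h2 := congrArg (fun z : ℤ => (z : ℂ)) this
      push_cast at h2
      rw [h2]
    rw [halt]
    by_cases hs0 : s = 0
    · subst hs0; simp
    · simp [hs0]
  rw [Finset.sum_congr rfl step3, Finset.sum_ite_eq' (Finset.range (j+1)) 0 (fun _ => b i j)]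
  simp
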